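/- Let a : ℝ → (0,1] be continuous, V : ℝ → [0,1] continuous, β > 0, λ ∈ ℝ, G : ℝ → ℝ continuous, and p₁ < p₂ with G(p₁) = λ - β, G(p₂) = λ and λ - β < G(p) < λ on (p₁, p₂). Fix δ ∈ (0, p₂ - p₁) small enough that G(p₂ - δ) = max{G(p) : p₁ ≤ p ≤ p₂ - δ} > λ - β, and fix h ∈ (0, (λ - G(p₂-δ))/(2β)) so that λ - βh - G(p₂-δ) > βh. Suppose ℓ₁ < ℓ₂ satisfy V(x) ≤ h for all x ∈ [ℓ₁, ℓ₂], and let L₁ ∈ (ℓ₁, ℓ₂) be such that ∫_{ℓ₁}^{L₁} dx/a(x) = ∫_{L₁}^{ℓ₂} dx/a(x) = y₀ with y₀ > (p₂ - p₁)/(βh). Then every C¹ solution f of a(x)f'(x) + G(f(x)) + βV(x) = λ with p₁ ≤ f ≤ p₂ on ℝ satisfies p₂ - δ ≤ f(x) ≤ p₂ for all x ∈ [L₁, ℓ₂]. -/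
import Mathlib


open Set MeasureTheory intervalIntegral

/-- Deterministic content of Lemma 4.2(b) (valley case): on a valley `V ≤ h` of scaled
length `2y₀`, every solution with values in `[p₁,p₂]` is trapped in `[p₂-δ, p₂]` on the
second half `[L₁, ℓ₂]`. -/
theorem stmt11
    (a V G : ℝ → ℝ) (ha_cont : Continuous a) (ha : ∀ x, 0 < a x ∧ a x ≤ 1)
    (hV_cont : Continuous V) (hV01 : ∀ x, 0 ≤ V x ∧ V x ≤ 1)
    (hGc : Continuous G) (β lam : ℝ) (hβ : 0 < β)
    (p₁ p₂ : ℝ) (hp : p₁ < p₂)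
    (hGp₁ : G p₁ = lam - β) (hGp₂ : G p₂ = lam)
    (hbetw : ∀ q ∈ Ioo p₁ p₂, lam - β < G q ∧ G q < lam)
    (δ : ℝ) (hδ : 0 < δ) (hδ' : δ < p₂ - p₁)
    (hmax : ∀ q ∈ Icc p₁ (p₂ - δ), G q ≤ G (p₂ - δ)) (hmaxgt : lam - β < G (p₂ - δ))
    (h : ℝ) (hh0 : 0 < h) (hh1 : h < (lam - G (p₂ - δ)) / (2 * β))
    (hhc : β * h < lam - β * h - G (p₂ - δ))
    (ℓ₁ ℓ₂ L₁ : ℝ) (hl₁ : ℓ₁ < L₁) (hl₂ : L₁ < ℓ₂)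
    (hvalley : ∀ x ∈ Icc ℓ₁ ℓ₂, V x ≤ h)
    (y₀ : ℝ) (hy₀ : (p₂ - p₁) / (β * h) < y₀)
    (hint1 : (∫ x in ℓ₁..L₁, 1 / a x) = y₀)
    (hint2 : (∫ x in L₁..ℓ₂, 1 / a x) = y₀)
    (f f' : ℝ → ℝ) (hf : ∀ x, HasDerivAt f (f' x) x) (hf'c : Continuous f')
    (hbd : ∀ x, p₁ ≤ f x ∧ f x ≤ p₂)
    (hsol : ∀ x, a x * f' x + G (f x) + β * V x = lam) :
    ∀ x ∈ Icc L₁ ℓ₂, p₂ - δ ≤ f x ∧ f x ≤ p₂ := by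

  have hfc : Continuous f := continuous_iff_continuousAt.2 fun x => (hf x).continuousAt
  have hainv : Continuous fun x => 1 / a x :=
    continuous_const.div ha_cont fun x => (ha x).1.ne'
  -- key derivative bounds when f ≤ p₂ - δ inside the valley
  have hkey : ∀ x, ℓ₁ ≤ x → x ≤ ℓ₂ → f x ≤ p₂ - δ → β * h < a x * f' x := by
    intro x hx1 hx2 hfx
    have hVx := hvalley x ⟨hx1, hx2⟩
    have hG : G (f x) ≤ G (p₂ - δ) := hmax _ ⟨(hbd x).1, hfx⟩
    have hs := hsol x
    nlinarith [mul_le_mul_of_nonneg_left hVx hβ.le]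
  have hpos : ∀ x, ℓ₁ ≤ x → x ≤ ℓ₂ → f x ≤ p₂ - δ → 0 < f' x := by
    intro x hx1 hx2 hfx
    have hk := hkey x hx1 hx2 hfx
    nlinarith [(ha x).1, mul_pos hβ hh0]
  have hlow : ∀ x, ℓ₁ ≤ x → x ≤ ℓ₂ → f x ≤ p₂ - δ → β * h * (1 / a x) ≤ f' x := by
    intro x hx1 hx2 hfx
    have hk := hkey x hx1 hx2 hfx
    have ha0 := (ha x).1
    rw [mul_one_div, div_le_iff₀ ha0]
    nlinarith
  -- Step 1: f reaches p₂ - δ somewhere on [ℓ₁, L₁]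
  have hstep1 : ∃ x₀ ∈ Icc ℓ₁ L₁, p₂ - δ ≤ f x₀ := by
    by_contra hcon
    push_neg at hcon
    have hle : ℓ₁ ≤ L₁ := hl₁.le
    have hintf : (∫ x in ℓ₁..L₁, f' x) = f L₁ - f ℓ₁ :=
      intervalIntegral.integral_eq_sub_of_hasDerivAt (fun x _ => hf x)
        (hf'c.intervalIntegrable _ _)
    have hmono : (∫ x in ℓ₁..L₁, β * h * (1 / a x)) ≤ ∫ x in ℓ₁..L₁, f' x := by
      apply intervalIntegral.integral_mono_on hle
        ((continuous_const.mul hainv).intervalIntegrable _ _)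
        (hf'c.intervalIntegrable _ _)
      intro x hx
      exact hlow x hx.1 (hx.2.trans hl₂.le) (hcon x hx).le
    rw [intervalIntegral.integral_const_mul, hint1, hintf] at hmono
    have h1 := (hbd ℓ₁).1
    have h2 := (hbd L₁).2
    have hbig : p₂ - p₁ < β * h * y₀ := by
      rw [div_lt_iff₀ (mul_pos hβ hh0)] at hy₀
      linarith [hy₀]
    linarith
  obtain ⟨x₀, hx₀mem, hx₀⟩ := hstep1
  intro x hx
  refine ⟨?_, (hbd x).2⟩
  by_contra hcx
  push_neg at hcx
  have hx₀x : x₀ ≤ x := hx₀mem.2.trans hx.1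
  have hxl2 : x ≤ ℓ₂ := hx.2
  set S := Icc x₀ x ∩ f ⁻¹' (Ici (p₂ - δ)) with hSdef
  have hScpt : IsCompact S :=
    isCompact_Icc.inter_right (isClosed_Ici.preimage hfc)
  have hSne : S.Nonempty := ⟨x₀, ⟨le_refl _, hx₀x⟩, hx₀⟩
  obtain ⟨⟨hs1, hs2⟩, hs3⟩ := hScpt.sSup_mem hSne
  set s := sSup S with hs
  have hsx : s < x := by
    rcases lt_or_eq_of_le hs2 with hlt | heq
    · exact hlt
    · rw [heq] at hs3; exact absurd hs3 (not_le.2 hcx)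
  have hIoc : ∀ y ∈ Ioc s x, f y < p₂ - δ := by
    intro y hy
    by_contra hcy
    push_neg at hcy
    have hyS : y ∈ S := ⟨⟨hs1.trans hy.1.le, hy.2⟩, hcy⟩
    exact absurd (le_csSup hScpt.bddAbove hyS) (not_le.2 hy.1)
  have hmono : StrictMonoOn f (Icc s x) := by
    apply strictMonoOn_of_deriv_pos (convex_Icc _ _) hfc.continuousOn
    intro y hy
    rw [interior_Icc] at hy
    rw [(hf y).deriv]
    apply hpos
    · exact hx₀mem.1.trans (hs1.trans hy.1.le)
    · exact hy.2.le.trans hxl2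
    · exact (hIoc y ⟨hy.1, hy.2.le⟩).le
  have hfx := hmono (left_mem_Icc.2 hsx.le) (right_mem_Icc.2 hsx.le) hsx
  have : p₂ - δ ≤ f s := hs3
  linarith
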